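/- For |q|<1, the theta function identity ∑_{n∈ℤ} (-1)^n q^{n²} = (q;q)_∞² / (q²;q²)_∞ holds. -/

import Mathlib

open scoped BigOperators

/-- The infinite q-Pochhammer symbol `(a;q)_∞ = ∏_{j=0}^{∞} (1 - a q^j)`. -/
noncomputable def qPochInf (a q : ℂ) : ℂ := ∏' j : ℕ, (1 - a * q ^ j)

namespace JTPaux
open Finset Filter

/-- Uniform positive lower bound for the real partial products. -/
lemma prod_lower {x : ℝ} (hx0 : 0 ≤ x) (hx : x < 1) :
    ∃ c : ℝ, 0 < c ∧ ∀ k : ℕ, c ≤ ∏ i ∈ range k, (1 - x^(i+1)) := by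
  set t : ℕ → ℝ := fun i => 1 - x^(i+1) with ht
  have hpos : ∀ i, 0 < t i := by
    intro i
    have : x^(i+1) ≤ x := pow_le_of_le_one hx0 hx.le (by omega)
    simp only [ht]; linarith
  have hsum : Summable (fun i => Real.log (t i)) := by
    apply Summable.of_norm_bounded (g := fun i => x^(i+1) / (1-x))
    · apply Summable.div_const
      exact ((summable_geometric_of_lt_one hx0 hx).mul_left x).congr
        (fun i => (pow_succ' x i).symm)
    · intro i
      have h1 : x^(i+1) ≤ x := pow_le_of_le_one hx0 hx.le (by omega)
      have h2 : 0 < t i := hpos i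
      have hlog : Real.log (t i) ≤ 0 := Real.log_nonpos (by positivity) (by simp [ht]; positivity)
      rw [Real.norm_eq_abs, abs_of_nonpos hlog]
      have h3 : -Real.log (t i) = Real.log (t i)⁻¹ := (Real.log_inv _).symm
      rw [h3]
      calc Real.log (t i)⁻¹ ≤ (t i)⁻¹ - 1 := Real.log_le_sub_one_of_pos (by positivity)
        _ = (1 - t i) / t i := by field_simp
        _ = x^(i+1) / t i := by simp [ht]
        _ ≤ x^(i+1) / (1-x) := by
            apply div_le_div_of_nonneg_left (by positivity) (by linarith) (by simp [ht]; linarith)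
  have hprod : HasProd t (Real.exp (∑' i, Real.log (t i))) := by
    have he : (Real.exp ∘ fun i => Real.log (t i)) = t := funext fun i => Real.exp_log (hpos i)
    have := hsum.hasSum.rexp
    rwa [he] at this
  refine ⟨Real.exp (∑' i, Real.log (t i)), Real.exp_pos _, fun k => ?_⟩
  refine le_of_tendsto hprod.tendsto_prod_nat ?_
  filter_upwards [eventually_ge_atTop k] with n hn
  have : ∏ i ∈ range n, t i = (∏ i ∈ range k, t i) * ∏ i ∈ Ico k n, t i :=
    (Finset.prod_range_mul_prod_Ico t hn).symm
  rw [this]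
  have h1 : ∏ i ∈ Ico k n, t i ≤ 1 := by
    apply Finset.prod_le_one
    · intro i _; exact (hpos i).le
    · intro i _; simp only [ht]; nlinarith [pow_nonneg hx0 (i+1)]
  nlinarith [Finset.prod_pos (fun i (_ : i ∈ range k) => hpos i), h1,
    Finset.prod_nonneg (fun i (_ : i ∈ Ico k n) => (hpos i).le)]


variable {a q Q : ℂ}

lemma term_ne_zero (ha : ‖a‖ < 1) (hq : ‖q‖ ≤ 1) (j : ℕ) : 1 - a * q ^ j ≠ 0 := by
  intro h
  have h1 : ‖a * q ^ j‖ < 1 := by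
    rw [norm_mul, norm_pow]
    calc ‖a‖ * ‖q‖ ^ j ≤ ‖a‖ * 1 := by
          exact mul_le_mul_of_nonneg_left (pow_le_one₀ (norm_nonneg q) hq) (norm_nonneg a)
      _ = ‖a‖ := mul_one _
      _ < 1 := ha
  have : a * q ^ j = 1 := by linear_combination -h
  rw [this] at h1; simp at h1

lemma summable_norm_term (ha : ‖a‖ < 1) (hq : ‖q‖ < 1) :
    Summable (fun j : ℕ => ‖a * q ^ j‖) := by
  simpa [norm_mul, norm_pow] using (summable_geometric_of_lt_one (norm_nonneg q) hq).mul_left ‖a‖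

lemma summable_log (ha : ‖a‖ < 1) (hq : ‖q‖ < 1) :
    Summable (fun j : ℕ => Complex.log (1 - a * q ^ j)) := by
  have hb : ∀ᶠ j in atTop, ‖Complex.log (1 - a * q ^ j)‖ ≤ (3/2) * ‖a * q ^ j‖ := by
    have h0 : Tendsto (fun j : ℕ => ‖a * q ^ j‖) atTop (nhds 0) := by
      simpa [norm_mul, norm_pow] using
        (tendsto_pow_atTop_nhds_zero_of_norm_lt_one (hq)).norm.const_mul ‖a‖
    filter_upwards [h0.eventually_le_const (by norm_num : (0:ℝ) < 1/2)] with j hj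
    have := Complex.norm_log_one_add_half_le_self (z := -(a * q ^ j)) (by simpa using hj)
    simpa [sub_eq_add_neg] using this
  exact Summable.of_norm_bounded_eventually_nat
    ((summable_norm_term ha hq).mul_left (3/2)) hb

lemma hasProd_term (ha : ‖a‖ < 1) (hq : ‖q‖ < 1) :
    HasProd (fun j : ℕ => 1 - a * q ^ j)
      (Complex.exp (∑' j : ℕ, Complex.log (1 - a * q ^ j))) := by
  have he : (Complex.exp ∘ fun j : ℕ => Complex.log (1 - a*q^j)) = fun j => 1 - a*q^j :=
    funext fun j => Complex.exp_log (term_ne_zero ha hq.le j)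
  have := (summable_log ha hq).hasSum.cexp
  rwa [he] at this

lemma tprod_term_eq (ha : ‖a‖ < 1) (hq : ‖q‖ < 1) :
    (∏' j : ℕ, (1 - a * q ^ j)) = Complex.exp (∑' j : ℕ, Complex.log (1 - a * q ^ j)) :=
  (hasProd_term ha hq).tprod_eq

lemma tprod_term_ne_zero (ha : ‖a‖ < 1) (hq : ‖q‖ < 1) :
    (∏' j : ℕ, (1 - a * q ^ j)) ≠ 0 := by
  rw [tprod_term_eq ha hq]; exact Complex.exp_ne_zero _

lemma tendsto_prod_term (ha : ‖a‖ < 1) (hq : ‖q‖ < 1) :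
    Tendsto (fun n : ℕ => ∏ j ∈ range n, (1 - a * q ^ j)) atTop
      (nhds (∏' j : ℕ, (1 - a * q ^ j))) := by
  rw [tprod_term_eq ha hq]
  exact (hasProd_term ha hq).tendsto_prod_nat


/-- Gaussian binomial coefficient (base `Q`), extended by `0` for `k > n`. -/
noncomputable def gb (Q : ℂ) : ℕ → ℕ → ℂ
  | 0, 0 => 1
  | 0, _+1 => 0
  | _+1, 0 => 1
  | n+1, k+1 => gb Q n (k+1) + Q^(n-k) * gb Q n k

variable {Q : ℂ}

@[simp] lemma gb_zero_right (n : ℕ) : gb Q n 0 = 1 := by cases n <;> rfl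

@[simp] lemma gb_zero_succ (k : ℕ) : gb Q 0 (k+1) = 0 := rfl

lemma gb_succ (n k : ℕ) : gb Q (n+1) (k+1) = gb Q n (k+1) + Q^(n-k) * gb Q n k := rfl

lemma gb_eq_zero : ∀ {n k : ℕ}, n < k → gb Q n k = 0 := by
  intro n
  induction n with
  | zero => intro k hk; match k, hk with | (k+1), _ => rfl
  | succ n ih =>
    intro k hk
    match k, hk with
    | (k+1), hk =>
      rw [gb_succ, ih (by omega), ih (by omega), mul_zero, add_zero]

@[simp] lemma gb_diag (n : ℕ) : gb Q n n = 1 := by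
  induction n with
  | zero => rfl
  | succ n ih => rw [gb_succ, gb_eq_zero (by omega), ih]; simp

lemma gb_one (n : ℕ) : gb Q n 1 = ∑ i ∈ range n, Q ^ i := by
  induction n with
  | zero => simp
  | succ n ih => rw [gb_succ, ih]; simp [Finset.sum_range_succ]

/-- second Pascal rule -/
lemma gb_pascal2 : ∀ n k : ℕ, gb Q (n+1) (k+1) = Q^(k+1) * gb Q n (k+1) + gb Q n k := by
  intro n
  induction n with
  | zero =>
    intro k
    match k with
    | 0 => simp [gb_succ]
    | (k+1) => rw [gb_succ, gb_eq_zero (show 0 < k+2 by omega), gb_eq_zero (show 0 < k+1 by omega)]; ring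
  | succ n ih =>
    have aux : ∀ k : ℕ, (1 - Q^(k+1)) * gb Q n (k+1) = (1 - Q^(n-k)) * gb Q n k := by
      intro k
      have h1 : gb Q n (k+1) + Q^(n-k) * gb Q n k = Q^(k+1) * gb Q n (k+1) + gb Q n k :=
        (gb_succ n k).symm.trans (ih k)
      linear_combination h1
    intro k
    match k with
    | 0 =>
      rw [gb_succ, gb_one]
      simp only [gb_zero_right, Nat.sub_zero, mul_one]
      have := geom_sum_mul Q (n+1)
      linear_combination -this
    | (k+1) =>
      rw [gb_succ, show (n+1) - (k+1) = n - k from by omega]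
      rcases lt_or_ge k n with h | h
      · have e1 : gb Q (n+1) (k+2) = gb Q n (k+2) + Q^(n-k-1) * gb Q n (k+1) := by
          rw [gb_succ, show n - (k+1) = n - k - 1 from by omega]
        have e2 : gb Q (n+1) (k+1) = gb Q n (k+1) + Q^(n-k) * gb Q n k := gb_succ n k
        have a1 : (1 - Q^(k+2)) * gb Q n (k+2) = (1 - Q^(n-k-1)) * gb Q n (k+1) := by
          have := aux (k+1)
          rwa [show n - (k+1) = n - k - 1 from by omega] at this
        have a2 := aux k
        have hq1 : Q^(n-k-1) * Q^(k+2) = Q^(n+1) := by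
          rw [← pow_add]; congr 1; omega
        have hq2 : Q^(n-k) * Q^(k+1) = Q^(n+1) := by
          rw [← pow_add]; congr 1; omega
        rw [e1, e2]
        linear_combination a1 + Q^(n-k)*a2 - gb Q n (k+1)*hq1 + gb Q n (k+1)*hq2
      · rw [gb_eq_zero (show n+1 < k+1+1 by omega)]
        rcases eq_or_lt_of_le h with rfl | h'
        · simp
        · rw [gb_eq_zero (show n+1 < k+1 by omega)]
          ring

lemma gb_aux (n k : ℕ) : (1 - Q^(k+1)) * gb Q n (k+1) = (1 - Q^(n-k)) * gb Q n k := by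
  have h1 : gb Q n (k+1) + Q^(n-k) * gb Q n k = Q^(k+1) * gb Q n (k+1) + gb Q n k :=
    (gb_succ n k).symm.trans (gb_pascal2 n k)
  linear_combination h1


/-- partial q-Pochhammer `(Q;Q)_n` -/
noncomputable def PQ (Q : ℂ) (n : ℕ) : ℂ := ∏ i ∈ range n, (1 - Q^(i+1))

lemma PQ_succ (n : ℕ) : PQ Q (n+1) = PQ Q n * (1 - Q^(n+1)) := prod_range_succ _ _

lemma gb_mul_PQ : ∀ n k : ℕ, k ≤ n → gb Q n k * (PQ Q k * PQ Q (n-k)) = PQ Q n := by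
  intro n
  induction n with
  | zero => intro k hk; interval_cases k; simp [PQ]
  | succ n ih =>
    intro k hk
    match k with
    | 0 => simp [PQ]
    | (k+1) =>
      rcases Nat.lt_or_ge k n with h | h
      · -- k+1 ≤ n
        have hnk : n + 1 - (k+1) = (n - k - 1) + 1 := by omega
        have hPnk : PQ Q (n+1-(k+1)) = PQ Q (n-(k+1)) * (1 - Q^(n-k)) := by
          rw [hnk, PQ_succ, show n - (k+1) = n-k-1 from by omega,
            show n-k-1+1 = n-k from by omega]
        rw [gb_succ, hPnk, show PQ Q (n+1) = PQ Q n * (1 - Q^(n+1)) from PQ_succ n]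
        have i1 := ih (k+1) (by omega)
        have i2 := ih k (by omega)
        have i2' : gb Q n k * (PQ Q k * (PQ Q (n-k-1) * (1 - Q^(n-k)))) = PQ Q n := by
          rw [show PQ Q (n-k-1) * (1 - Q^(n-k)) = PQ Q (n-k) from ?_]
          · exact i2
          · rw [show n-k = (n-k-1)+1 from by omega, PQ_succ, show n-k-1+1 = n-k from by omega]
        have hq2 : Q^(n-k) * Q^(k+1) = Q^(n+1) := by rw [← pow_add]; congr 1; omega
        have e3 : PQ Q (k+1) = PQ Q k * (1 - Q^(k+1)) := PQ_succ k
        rw [show n - (k+1) = n-k-1 from by omega] at i1 ⊢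
        linear_combination (1 - Q^(n-k))*i1 + Q^(n-k)*(1-Q^(k+1))*i2'
          + Q^(n-k)*(gb Q n k)*(PQ Q (n-k-1))*(1-Q^(n-k))*e3 - (PQ Q n)*hq2
      · -- k ≥ n, so k+1 = n+1
        have : k = n := by omega
        subst this
        simp [gb_diag, PQ]

namespace K
variable {Q : ℂ}

lemma gb_K0 (M : ℕ) : gb Q (M+2) 1 = (1 + Q^(M+1)) * gb Q M 0 + Q * gb Q M 1 := by
  rw [gb_one, gb_one, gb_zero_right, geom_sum_succ', geom_sum_succ]
  ring

lemma gb_Knat (M k : ℕ) : gb Q (M+2) (k+2) =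
    (1 + Q^(M+1)) * gb Q M (k+1) + Q^(M-k) * gb Q M k + Q^(k+2) * gb Q M (k+2) := by
  rcases Nat.lt_or_ge k M with h | h
  · have d1 : gb Q (M+2) (k+2) = gb Q (M+1) (k+2) + Q^(M-k) * gb Q (M+1) (k+1) := by
      rw [gb_succ, show (M+1)-(k+1) = M-k from by omega]
    have d2 : gb Q (M+1) (k+2) = gb Q M (k+2) + Q^(M-k-1) * gb Q M (k+1) := by
      rw [gb_succ, show M-(k+1) = M-k-1 from by omega]
    have d3 : gb Q (M+1) (k+1) = gb Q M (k+1) + Q^(M-k) * gb Q M k := gb_succ M k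
    have a1 : (1-Q^(k+2)) * gb Q M (k+2) = (1-Q^(M-k-1)) * gb Q M (k+1) := by
      have := gb_aux (Q := Q) M (k+1)
      rwa [show M-(k+1) = M-k-1 from by omega] at this
    have a2 := gb_aux (Q := Q) M k
    have hq2 : Q^(M-k) * Q^(k+1) = Q^(M+1) := by rw [← pow_add]; congr 1; omega
    rw [d1, d2, d3]
    linear_combination a1 + Q^(M-k)*a2 + gb Q M (k+1) * hq2
  · rcases Nat.eq_or_lt_of_le h with rfl | h'
    · rw [gb_diag, gb_eq_zero (show M < M+1 by omega), gb_eq_zero (show M < M+2 by omega),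
        gb_diag, Nat.sub_self]
      ring
    · rw [gb_eq_zero (show M < k+2 by omega), gb_eq_zero (show M < k+1 by omega),
        gb_eq_zero (show M < k by omega), gb_eq_zero (show M+2 < k+2 by omega)]
      ring

end K

/-- `gb` extended to integer lower index. -/
noncomputable def gbZ (Q : ℂ) (n : ℕ) (k : ℤ) : ℂ := if 0 ≤ k then gb Q n k.toNat else 0

@[simp] lemma gbZ_coe (n k : ℕ) : gbZ Q n (k : ℤ) = gb Q n k := by simp [gbZ]

lemma gbZ_neg {k : ℤ} (n : ℕ) (h : k < 0) : gbZ Q n k = 0 := by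
  simp [gbZ, not_le.mpr h]

lemma gbZ_big {k : ℤ} (n : ℕ) (h : (n:ℤ) < k) : gbZ Q n k = 0 := by
  unfold gbZ
  rcases le_or_gt 0 k with h0 | h0
  · rw [if_pos h0, gb_eq_zero (by omega)]
  · rw [if_neg (not_le.mpr h0)]

lemma gb_Kint (n : ℕ) (m : ℤ) :
    gbZ Q (2*n+2) ((n:ℤ)+1+m) = (1+Q^(2*n+1)) * gbZ Q (2*n) ((n:ℤ)+m)
      + Q^((n:ℤ)+1-m) * gbZ Q (2*n) ((n:ℤ)+m-1)
      + Q^((n:ℤ)+1+m) * gbZ Q (2*n) ((n:ℤ)+m+1) := by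
  have hL : ∀ j : ℕ, ((n:ℤ)+1+m = j) → gbZ Q (2*n+2) ((n:ℤ)+1+m) = gb Q (2*n+2) j := by
    intro j hj; rw [hj, gbZ_coe]
  have hT : ∀ j : ℕ, ∀ t : ℤ, (t = j) → gbZ Q (2*n) t = gb Q (2*n) j := by
    intro j t hj; rw [hj, gbZ_coe]
  rcases lt_trichotomy m (-(n:ℤ)-1) with hm | hm | hm
  · rw [gbZ_neg _ (by omega), gbZ_neg _ (by omega), gbZ_neg _ (by omega), gbZ_neg _ (by omega)]
    ring
  · rw [hL 0 (by omega), hT 0 ((n:ℤ)+m+1) (by omega), gbZ_neg _ (by omega), gbZ_neg _ (by omega),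
      show (n:ℤ)+1+m = (0:ℤ) from by omega]
    simp
  · rcases lt_trichotomy m ((n:ℤ)+1) with hm2 | hm2 | hm2
    · rcases eq_or_lt_of_le (show -(n:ℤ) ≤ m by omega) with hmn | hmn
      · -- m = -n : use K0
        rw [hL 1 (by omega), hT 0 ((n:ℤ)+m) (by omega), hT 1 ((n:ℤ)+m+1) (by omega),
          gbZ_neg _ (by omega), show (n:ℤ)+1+m = (1:ℤ) from by omega,
          show (2*n+2) = (2*n)+2 from rfl, K.gb_K0, zpow_one]
        ring
      · -- -n < m ≤ n
        set k : ℕ := ((n:ℤ)+m-1).toNat with hk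
        have hk' : (k:ℤ) = (n:ℤ)+m-1 := by omega
        have hc1 : Q^((n:ℤ)+1-m) = Q^((2*n-k : ℕ)) := by
          rw [show (n:ℤ)+1-m = ((2*n-k:ℕ):ℤ) from by omega, zpow_natCast]
        have hc2 : Q^((n:ℤ)+1+m) = Q^((k+2 : ℕ)) := by
          rw [show (n:ℤ)+1+m = ((k+2:ℕ):ℤ) from by omega, zpow_natCast]
        rw [hL (k+2) (by omega), hT (k+1) ((n:ℤ)+m) (by omega), hT k ((n:ℤ)+m-1) (by omega),
          hT (k+2) ((n:ℤ)+m+1) (by omega), hc1, hc2,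
          show (2*n+2) = (2*n)+2 from rfl, K.gb_Knat]
    · -- m = n+1
      rw [hL (2*n+2) (by omega), hT (2*n) ((n:ℤ)+m-1) (by omega),
        gbZ_big _ (by omega), gbZ_big _ (by omega),
        show (n:ℤ)+1-m = (0:ℤ) from by omega]
      simp [gb_diag]
    · rw [gbZ_big _ (by omega), gbZ_big _ (by omega), gbZ_big _ (by omega), gbZ_big _ (by omega)]
      ring


lemma one_sub_ne {z : ℂ} (h : ‖z‖ < 1) : 1 - z ≠ 0 := by
  intro h0
  have : z = 1 := by linear_combination -h0
  rw [this] at h; norm_num at h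

lemma norm_pow_succ_lt (hQ : ‖Q‖ < 1) (i : ℕ) : ‖Q^(i+1)‖ < 1 := by
  rw [norm_pow]
  calc ‖Q‖^(i+1) ≤ ‖Q‖ := pow_le_of_le_one (norm_nonneg Q) hQ.le (by omega)
    _ < 1 := hQ

lemma PQ_ne_zero (hQ : ‖Q‖ < 1) (n : ℕ) : PQ Q n ≠ 0 := by
  rw [PQ]
  exact Finset.prod_ne_zero_iff.mpr fun i _ => one_sub_ne (norm_pow_succ_lt hQ i)

lemma gb_eq_div (hQ : ‖Q‖ < 1) {n k : ℕ} (hk : k ≤ n) :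
    gb Q n k = PQ Q n * (PQ Q k)⁻¹ * (PQ Q (n-k))⁻¹ := by
  have h := gb_mul_PQ (Q := Q) n k hk
  field_simp [PQ_ne_zero hQ] at h ⊢
  linear_combination h

lemma summable_normQ (hQ : ‖Q‖ < 1) : Summable (fun i : ℕ => ‖Q‖^(i+1)) :=
  ((summable_geometric_of_lt_one (norm_nonneg Q) hQ).mul_left ‖Q‖).congr
    (fun i => (pow_succ' ‖Q‖ i).symm)

lemma normPQ_le (hQ : ‖Q‖ < 1) (n : ℕ) :
    ‖PQ Q n‖ ≤ Real.exp (∑' i : ℕ, ‖Q‖^(i+1)) := by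
  rw [PQ, norm_prod]
  calc ∏ i ∈ range n, ‖1 - Q^(i+1)‖ ≤ ∏ i ∈ range n, Real.exp (‖Q‖^(i+1)) := by
        apply Finset.prod_le_prod (fun i _ => norm_nonneg _)
        intro i _
        calc ‖1 - Q^(i+1)‖ ≤ ‖(1:ℂ)‖ + ‖Q^(i+1)‖ := norm_sub_le _ _
          _ = 1 + ‖Q‖^(i+1) := by rw [norm_one, norm_pow]
          _ ≤ Real.exp (‖Q‖^(i+1)) := Real.add_one_le_exp _ |>.trans_eq' (by ring)
    _ = Real.exp (∑ i ∈ range n, ‖Q‖^(i+1)) := (Real.exp_sum _ _).symm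
    _ ≤ Real.exp (∑' i : ℕ, ‖Q‖^(i+1)) := by
        apply Real.exp_le_exp.mpr
        exact (summable_normQ hQ).sum_le_tsum _ (fun i _ => by positivity)

lemma gb_bound (hQ : ‖Q‖ < 1) : ∃ C : ℝ, 0 < C ∧ ∀ n k : ℕ, ‖gb Q n k‖ ≤ C := by
  obtain ⟨c, hc, hck⟩ := prod_lower (norm_nonneg Q) hQ
  have hPQ_ge : ∀ k : ℕ, c ≤ ‖PQ Q k‖ := by
    intro k
    calc c ≤ ∏ i ∈ range k, (1 - ‖Q‖^(i+1)) := hck k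
      _ ≤ ∏ i ∈ range k, ‖1 - Q^(i+1)‖ := by
          apply Finset.prod_le_prod
          · intro i _; nlinarith [norm_pow_succ_lt hQ i, norm_nonneg (Q^(i+1)),
              (norm_pow Q (i+1)).symm]
          · intro i _
            calc 1 - ‖Q‖^(i+1) = ‖(1:ℂ)‖ - ‖Q^(i+1)‖ := by rw [norm_one, norm_pow]
              _ ≤ ‖1 - Q^(i+1)‖ := norm_sub_norm_le _ _
      _ = ‖PQ Q k‖ := (norm_prod _ _).symm
  refine ⟨Real.exp (∑' i : ℕ, ‖Q‖^(i+1)) / (c*c), by positivity, fun n k => ?_⟩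
  rcases le_or_gt k n with hk | hk
  · have h := gb_mul_PQ (Q := Q) n k hk
    have hnorm : ‖gb Q n k‖ * (‖PQ Q k‖ * ‖PQ Q (n-k)‖) = ‖PQ Q n‖ := by
      rw [← norm_mul, ← norm_mul, h]
    rw [le_div_iff₀ (by positivity)]
    calc ‖gb Q n k‖ * (c*c) ≤ ‖gb Q n k‖ * (‖PQ Q k‖ * ‖PQ Q (n-k)‖) := by
          apply mul_le_mul_of_nonneg_left _ (norm_nonneg _)
          exact mul_le_mul (hPQ_ge k) (hPQ_ge (n-k)) hc.le (norm_nonneg _)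
      _ = ‖PQ Q n‖ := hnorm
      _ ≤ _ := normPQ_le hQ n
  · rw [gb_eq_zero hk, norm_zero]
    positivity


section Sums
variable {q : ℂ} (hq0 : q ≠ 0)

/-- summand of the theta series -/
noncomputable def w (q : ℂ) (m : ℤ) : ℂ := (-1:ℂ)^m * q^(m.natAbs^2)

lemma w_eq (m : ℤ) : w q m = (-1:ℂ)^m * q^(m^2 : ℤ) := by
  rw [w, ← zpow_natCast q (m.natAbs^2)]
  congr 1
  push_cast
  rw [sq_abs]

include hq0

lemma w_shift_down (N : ℕ) (m : ℤ) :
    w q m * (q^2)^((N:ℤ)+1-m) = -q^(2*N+1) * w q (m-1) := by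
  have hne : (-1 : ℂ) ≠ 0 := by norm_num
  have h2 : ((q:ℂ)^2)^((N:ℤ)+1-m) = q ^ ((2*((N:ℤ)+1-m)) : ℤ) := by
    rw [← zpow_natCast q 2, ← zpow_mul]; norm_num
  have h3 : (-1:ℂ)^(m-1:ℤ) = (-1:ℂ)^m * (-1:ℂ)⁻¹ := by
    rw [zpow_sub₀ hne, zpow_one, div_eq_mul_inv]
  have h4 : (q:ℂ)^(2*N+1) = q^((2*(N:ℤ)+1 : ℤ)) := by
    rw [← zpow_natCast]; norm_num
  have h5 : q^(m^2:ℤ) * q^((2*((N:ℤ)+1-m)):ℤ) = q^((2*(N:ℤ)+1):ℤ) * q^(((m-1)^2 : ℤ)) := by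
    rw [← zpow_add₀ hq0, ← zpow_add₀ hq0]; congr 1; ring
  rw [w_eq, w_eq, h2, h3, h4, show ((-1:ℂ))⁻¹ = -1 from by norm_num]
  calc (-1:ℂ)^m * q^(m^2:ℤ) * q^((2*((N:ℤ)+1-m)):ℤ)
      = (-1:ℂ)^m * (q^(m^2:ℤ) * q^((2*((N:ℤ)+1-m)):ℤ)) := by ring
    _ = (-1:ℂ)^m * (q^((2*(N:ℤ)+1):ℤ) * q^(((m-1)^2:ℤ))) := by rw [h5]
    _ = -q^((2*(N:ℤ)+1):ℤ) * ((-1:ℂ)^m * -1 * q^((m-1)^2:ℤ)) := by ring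

lemma w_shift_up (N : ℕ) (m : ℤ) :
    w q m * (q^2)^((N:ℤ)+1+m) = -q^(2*N+1) * w q (m+1) := by
  have hne : (-1 : ℂ) ≠ 0 := by norm_num
  have h2 : ((q:ℂ)^2)^((N:ℤ)+1+m) = q ^ ((2*((N:ℤ)+1+m)) : ℤ) := by
    rw [← zpow_natCast q 2, ← zpow_mul]; norm_num
  have h3 : (-1:ℂ)^(m+1:ℤ) = (-1:ℂ)^m * (-1:ℂ) := by
    rw [zpow_add₀ hne, zpow_one]
  have h4 : (q:ℂ)^(2*N+1) = q^((2*(N:ℤ)+1 : ℤ)) := by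
    rw [← zpow_natCast]; norm_num
  have h5 : q^(m^2:ℤ) * q^((2*((N:ℤ)+1+m)):ℤ) = q^((2*(N:ℤ)+1):ℤ) * q^(((m+1)^2 : ℤ)) := by
    rw [← zpow_add₀ hq0, ← zpow_add₀ hq0]; congr 1; ring
  rw [w_eq, w_eq, h2, h3, h4]
  calc (-1:ℂ)^m * q^(m^2:ℤ) * q^((2*((N:ℤ)+1+m)):ℤ)
      = (-1:ℂ)^m * (q^(m^2:ℤ) * q^((2*((N:ℤ)+1+m)):ℤ)) := by ring
    _ = (-1:ℂ)^m * (q^((2*(N:ℤ)+1):ℤ) * q^(((m+1)^2:ℤ))) := by rw [h5]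
    _ = -q^((2*(N:ℤ)+1):ℤ) * ((-1:ℂ)^m * -1 * q^((m+1)^2:ℤ)) := by ring

/-- the `N`-th truncated theta sum -/
noncomputable def f (q : ℂ) (N : ℕ) (m : ℤ) : ℂ := w q m * gbZ (q^2) (2*N) ((N:ℤ)+m)

omit hq0 in
lemma f_support (N : ℕ) (m : ℤ) (h : (N:ℕ) < m.natAbs) : f q N m = 0 := by
  rcases lt_or_ge m 0 with h' | h'
  · rw [f, gbZ_neg _ (by omega), mul_zero]
  · rw [f, gbZ_big _ (by omega), mul_zero]

omit hq0 in
lemma f_summable (N : ℕ) : Summable (f q N) := by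
  apply summable_of_ne_finset_zero (s := Finset.Icc (-(N:ℤ)) N)
  intro m hm
  simp only [Finset.mem_Icc] at hm
  push_neg at hm
  exact f_support N m (by omega)

lemma f_rec (N : ℕ) (m : ℤ) :
    f q (N+1) m = (1 + q^(4*N+2)) * f q N m
      - q^(2*N+1) * (f q N (m-1) + f q N (m+1)) := by
  have h1 : f q (N+1) m = w q m * gbZ (q^2) (2*N+2) ((N:ℤ)+1+m) := by
    rw [f, show 2*(N+1) = 2*N+2 from by ring,
      show ((N+1:ℕ):ℤ)+m = (N:ℤ)+1+m from by push_cast; ring]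
  rw [h1, gb_Kint]
  have h2 : ((q:ℂ)^2)^(2*N+1) = q^(4*N+2) := by rw [← pow_mul]; congr 1; omega
  have h3 : (N:ℤ) + m - 1 = (N:ℤ) + (m-1) := by ring
  have h4 : (N:ℤ) + m + 1 = (N:ℤ) + (m+1) := by ring
  rw [mul_add, mul_add, h2, h3, h4]
  have e1 := w_shift_down hq0 N m
  have e2 := w_shift_up hq0 N m
  rw [f, f, f]
  linear_combination gbZ (q^2) (2*N) ((N:ℤ)+(m-1)) * e1 + gbZ (q^2) (2*N) ((N:ℤ)+(m+1)) * e2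

/-- the truncated bilateral sum -/
noncomputable def S (q : ℂ) (N : ℕ) : ℂ := ∑' m : ℤ, f q N m

omit hq0 in
lemma S_zero : S q 0 = 1 := by
  rw [S, tsum_eq_single 0]
  · simp [f, w, gbZ, gb]
  · intro m hm
    exact f_support 0 m (by omega)

lemma S_succ (N : ℕ) : S q (N+1) = (1 - q^(2*N+1))^2 * S q N := by
  have hs := f_summable (q := q) N
  have hs1 : Summable (fun m : ℤ => f q N (m-1)) :=
    ((Equiv.subRight (1:ℤ)).summable_iff (f := f q N)).mpr hs
  have hs2 : Summable (fun m : ℤ => f q N (m+1)) :=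
    ((Equiv.addRight (1:ℤ)).summable_iff (f := f q N)).mpr hs
  have t1 : ∑' m : ℤ, f q N (m-1) = S q N := (Equiv.subRight (1:ℤ)).tsum_eq (f q N)
  have t2 : ∑' m : ℤ, f q N (m+1) = S q N := (Equiv.addRight (1:ℤ)).tsum_eq (f q N)
  calc S q (N+1) = ∑' m : ℤ, ((1 + q^(4*N+2)) * f q N m
      - q^(2*N+1) * (f q N (m-1) + f q N (m+1))) := tsum_congr (f_rec hq0 N)
    _ = (1 + q^(4*N+2)) * S q N - q^(2*N+1) * (S q N + S q N) := by
        rw [(hs.mul_left _).tsum_sub (((hs1.add hs2)).mul_left _), tsum_mul_left,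
          tsum_mul_left, hs1.tsum_add hs2, t1, t2, S]
    _ = (1 - q^(2*N+1))^2 * S q N := by
        have h2 : q^(4*N+2) = q^(2*N+1) * q^(2*N+1) := by rw [← pow_add]; congr 1; omega
        rw [h2]; ring

lemma S_prod (N : ℕ) : S q N = ∏ j ∈ range N, (1 - q^(2*j+1))^2 := by
  induction N with
  | zero => simpa using S_zero (q := q)
  | succ N ih => rw [S_succ hq0, ih, prod_range_succ]; ring

end Sums

end JTPaux

section Main
open Finset Filter JTPaux

/-- For |q|<1, `∑_{n∈ℤ} (-1)^n q^{n²} = (q;q)_∞²/(q²;q²)_∞`. -/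
theorem stmt_7 (q : ℂ) (hq : ‖q‖ < 1) :
    ∑' n : ℤ, (-1 : ℂ) ^ n * q ^ (n.natAbs ^ 2)
      = qPochInf q q ^ 2 / qPochInf (q ^ 2) (q ^ 2) := by
  rcases eq_or_ne q 0 with rfl | hq0
  · have h1 : ∑' n : ℤ, (-1 : ℂ) ^ n * (0:ℂ) ^ (n.natAbs ^ 2) = 1 := by
      rw [tsum_eq_single 0]
      · norm_num
      · intro m hm
        rw [zero_pow (by simpa using hm), mul_zero]
    have h2 : qPochInf 0 0 = 1 := by
      rw [qPochInf]
      simp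
    norm_num [h1, h2]
  · -- main case
    set Q : ℂ := q^2 with hQdef
    have hQ : ‖Q‖ < 1 := by
      rw [hQdef, norm_pow]
      exact pow_lt_one₀ (norm_nonneg q) hq (by norm_num)
    set Pi : ℂ := ∏' j : ℕ, (1 - Q * Q ^ j) with hPidef
    set Po : ℂ := ∏' j : ℕ, (1 - q * Q ^ j) with hPodef
    have hPi0 : Pi ≠ 0 := tprod_term_ne_zero hQ hQ
    -- Limit 1 : S q N → Po ^ 2
    have hodd : ∀ j : ℕ, (1 : ℂ) - q^(2*j+1) = 1 - q * Q^j := by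
      intro j; rw [hQdef]; ring_nf
    have lim1 : Tendsto (S q) atTop (nhds (Po ^ 2)) := by
      have he : ∀ N : ℕ, S q N = (∏ j ∈ range N, (1 - q * Q^j))^2 := by
        intro N
        rw [S_prod hq0 N, ← Finset.prod_pow]
        exact Finset.prod_congr rfl fun j _ => by rw [hodd j]
      rw [funext he]
      exact (tendsto_prod_term hq hQ).pow 2
    -- Tannery
    obtain ⟨C, hC, hgbC⟩ := gb_bound hQ
    have hwnorm : ∀ m : ℤ, ‖w q m‖ = ‖q‖ ^ (m.natAbs ^ 2) := by
      intro m
      rw [w, norm_mul, norm_zpow, norm_pow, norm_neg, norm_one, one_zpow, one_mul]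
    have hfb : ∀ (N : ℕ) (m : ℤ), ‖f q N m‖ ≤ C * ‖q‖ ^ m.natAbs := by
      intro N m
      rw [f, norm_mul, hwnorm]
      have h1 : ‖gbZ Q (2*N) ((N:ℤ)+m)‖ ≤ C := by
        rw [gbZ]
        split
        · exact hgbC _ _
        · simpa using hC.le
      have h2 : ‖q‖ ^ (m.natAbs^2) ≤ ‖q‖ ^ m.natAbs :=
        pow_le_pow_of_le_one (norm_nonneg q) hq.le (Nat.le_self_pow two_ne_zero _)
      calc ‖q‖^(m.natAbs^2) * ‖gbZ Q (2*N) ((N:ℤ)+m)‖ ≤ ‖q‖^(m.natAbs) * C := by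
            apply mul_le_mul h2 h1 (norm_nonneg _) (by positivity)
        _ = C * ‖q‖^(m.natAbs) := by ring
    have hbsum : Summable (fun m : ℤ => C * ‖q‖ ^ m.natAbs) := by
      apply Summable.mul_left
      apply Summable.of_nat_of_neg_add_one
      · simpa using summable_geometric_of_lt_one (norm_nonneg q) hq
      · have base : Summable (fun i : ℕ => ‖q‖^(i+1)) :=
          ((summable_geometric_of_lt_one (norm_nonneg q) hq).mul_left ‖q‖).congr
            (fun i => (pow_succ' ‖q‖ i).symm)
        exact base.congr fun i => congrArg (fun t : ℕ => ‖q‖ ^ t) (by omega)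
    have tendsto_PQ : Tendsto (PQ Q) atTop (nhds Pi) := by
      have he : PQ Q = fun n => ∏ i ∈ range n, (1 - Q * Q^i) := by
        funext n
        exact Finset.prod_congr rfl fun i _ => by rw [pow_succ']
      rw [he, hPidef]
      exact tendsto_prod_term hQ hQ
    have hab : ∀ m : ℤ, Tendsto (fun N => f q N m) atTop (nhds (w q m * Pi⁻¹)) := by
      intro m
      have hev : ∀ᶠ N : ℕ in atTop, f q N m
          = w q m * (PQ Q (2*N) * (PQ Q ((N:ℤ)+m).toNat)⁻¹ * (PQ Q ((N:ℤ)-m).toNat)⁻¹) := by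
        filter_upwards [eventually_ge_atTop m.natAbs] with N hN
        have h0 : (0:ℤ) ≤ (N:ℤ)+m := by omega
        have hgbz : gbZ Q (2*N) ((N:ℤ)+m) = gb Q (2*N) ((N:ℤ)+m).toNat := by
          rw [gbZ, if_pos h0]
        rw [f, hgbz, gb_eq_div hQ (show ((N:ℤ)+m).toNat ≤ 2*N by omega),
          show 2*N - ((N:ℤ)+m).toNat = ((N:ℤ)-m).toNat by omega]
      have ht1 : Tendsto (fun N : ℕ => 2*N) atTop atTop :=
        tendsto_atTop_atTop.mpr fun b => ⟨b, fun a ha => by omega⟩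
      have ht2 : Tendsto (fun N : ℕ => ((N:ℤ)+m).toNat) atTop atTop :=
        tendsto_atTop_atTop.mpr fun b => ⟨b + m.natAbs, fun a ha => by omega⟩
      have ht3 : Tendsto (fun N : ℕ => ((N:ℤ)-m).toNat) atTop atTop :=
        tendsto_atTop_atTop.mpr fun b => ⟨b + m.natAbs, fun a ha => by omega⟩
      have hlim : Tendsto (fun N : ℕ => w q m * (PQ Q (2*N) * (PQ Q ((N:ℤ)+m).toNat)⁻¹
          * (PQ Q ((N:ℤ)-m).toNat)⁻¹)) atTop (nhds (w q m * (Pi * Pi⁻¹ * Pi⁻¹))) := by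
        apply Tendsto.const_mul
        exact ((tendsto_PQ.comp ht1).mul ((tendsto_PQ.comp ht2).inv₀ hPi0)).mul
          ((tendsto_PQ.comp ht3).inv₀ hPi0)
      have heq : w q m * (Pi * Pi⁻¹ * Pi⁻¹) = w q m * Pi⁻¹ := by
        field_simp
      rw [heq] at hlim
      exact Tendsto.congr' (hev.mono fun N hN => hN.symm) hlim
    have lim2 : Tendsto (S q) atTop (nhds (∑' m : ℤ, w q m * Pi⁻¹)) :=
      tendsto_tsum_of_dominated_convergence (f := fun N (m : ℤ) => f q N m)
        (g := fun m => w q m * Pi⁻¹) (bound := fun m => C * ‖q‖ ^ m.natAbs)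
        hbsum hab (Eventually.of_forall fun N => hfb N)
    have key : (∑' m : ℤ, w q m) * Pi⁻¹ = Po ^ 2 := by
      have := tendsto_nhds_unique lim2 lim1
      rwa [tsum_mul_right] at this
    have key2 : (∑' m : ℤ, w q m) = Po ^ 2 * Pi := by
      rw [← key]; field_simp
    -- even/odd split of (q;q)∞
    have hsplit : qPochInf q q = Po * Pi := by
      rw [qPochInf]
      rw [← tprod_even_mul_odd (f := fun j : ℕ => 1 - q * q ^ j)
        (he := ?_) (ho := ?_)]
      · congr 1
        · rw [hPodef]
          exact tprod_congr fun k => by rw [hQdef]; ring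
        · rw [hPidef]
          exact tprod_congr fun k => by rw [hQdef]; ring
      · exact (hasProd_term hq hQ).multipliable.congr (fun k => by rw [hQdef]; ring)
      · exact (hasProd_term hQ hQ).multipliable.congr (fun k => by rw [hQdef]; ring)
    -- final assembly
    have hPQ2 : qPochInf Q Q = Pi := by
      rw [show qPochInf Q Q = ∏' j : ℕ, (1 - Q*Q^j) from rfl, ← hPidef]
    have hLHS : ∑' n : ℤ, (-1 : ℂ) ^ n * q ^ (n.natAbs ^ 2) = ∑' m : ℤ, w q m :=
      tsum_congr fun n => rfl
    rw [hLHS, key2, hsplit, hPQ2]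
    field_simp

end Main
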